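/- Let W be a channel with arbitrary input alphabet 𝒳 and finite output alphabet 𝒴 and let x^n, x'^n ∈ 𝒳^n. Then 1 − ½‖W_{x^n} − W_{x'^n}‖₁ ≤ exp(−(1/4) · ∑_{i=1}^n |√W_{x_i} − √W_{x'_i}|₂²), where exp denotes the natural exponential. -/
import Mathlib

open Real Filter

namespace DIChannel

variable {X Y : Type*}

/-- `p` is a probability distribution on the finite alphabet `Y`. -/
def IsDist [Fintype Y] (p : Y → ℝ) : Prop := (∀ y, 0 ≤ p y) ∧ ∑ y, p y = 1

/-- Product (memoryless) output distribution `W_{x^n}` on `Y^n`. -/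
noncomputable def prodP [Fintype Y] (W : X → Y → ℝ) {n : ℕ} (u : Fin n → X)
    (y : Fin n → Y) : ℝ := ∏ i, W (u i) (y i)

/-- Total variation distance `½‖p − q‖₁` between distributions on a finite set. -/
noncomputable def tvd {Z : Type*} [Fintype Z] (p q : Z → ℝ) : ℝ := (∑ z, |p z - q z|) / 2

end DIChannel

open DIChannel

private lemma sqrt_prod' {ι : Type*} (s : Finset ι) (f : ι → ℝ) (hf : ∀ i ∈ s, 0 ≤ f i) :
    Real.sqrt (∏ i ∈ s, f i) = ∏ i ∈ s, Real.sqrt (f i) := by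
  induction s using Finset.cons_induction with
  | empty => simp
  | cons a s ha ih =>
    rw [Finset.prod_cons, Finset.prod_cons,
      Real.sqrt_mul (hf a (Finset.mem_cons_self a s)), ih (fun i hi => hf i (Finset.mem_cons_of_mem hi))]

/-- 1 - TV ≤ Bhattacharyya coefficient. -/
private lemma one_sub_tvd_le {Z : Type*} [Fintype Z] (p q : Z → ℝ)
    (hp : IsDist p) (hq : IsDist q) :
    1 - tvd p q ≤ ∑ z, Real.sqrt (p z * q z) := by
  have key : ∀ z, |p z - q z| = p z + q z - 2 * min (p z) (q z) := by
    intro z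
    rw [← max_sub_min_eq_abs]
    rcases le_total (p z) (q z) with h | h <;> simp [max_eq_right, max_eq_left, h] <;> ring
  have htvd : tvd p q = 1 - ∑ z, min (p z) (q z) := by
    unfold tvd
    simp only [key]
    rw [Finset.sum_sub_distrib, Finset.sum_add_distrib, hp.2, hq.2, ← Finset.mul_sum]
    ring
  rw [htvd]
  have : ∀ z, min (p z) (q z) ≤ Real.sqrt (p z * q z) := by
    intro z
    have h0 : 0 ≤ min (p z) (q z) := le_min (hp.1 z) (hq.1 z)
    calc min (p z) (q z) = Real.sqrt (min (p z) (q z) * min (p z) (q z)) :=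
          (Real.sqrt_mul_self h0).symm
      _ ≤ Real.sqrt (p z * q z) :=
          Real.sqrt_le_sqrt (mul_le_mul (min_le_left _ _) (min_le_right _ _) h0 (hp.1 z))
  have hs : ∑ z, min (p z) (q z) ≤ ∑ z, Real.sqrt (p z * q z) :=
    Finset.sum_le_sum (fun z _ => this z)
  linarith

/-- Lower bound on how exponentially close to 1 the total variation distance between two
product output distributions is, in terms of the Euclidean distances of the single-letter
square-root vectors (Equation (17) of the paper). -/
theorem stmt4 {X Y : Type*} [Fintype Y] (W : X → Y → ℝ) (hW : ∀ x, IsDist (W x))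
    (n : ℕ) (u u' : Fin n → X) :
    1 - tvd (prodP W u) (prodP W u') ≤
      Real.exp (-(1 / 4) * ∑ i, ∑ y, (Real.sqrt (W (u i) y) - Real.sqrt (W (u' i) y)) ^ 2) := by
  -- distributions
  have hPu : IsDist (prodP W u) := by
    constructor
    · intro y; exact Finset.prod_nonneg fun i _ => (hW (u i)).1 (y i)
    · unfold prodP
      rw [← Fintype.piFinset_univ, ← Finset.prod_univ_sum]
      simp [(fun i => (hW (u i)).2)]
  have hPu' : IsDist (prodP W u') := by
    constructor
    · intro y; exact Finset.prod_nonneg fun i _ => (hW (u' i)).1 (y i)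
    · unfold prodP
      rw [← Fintype.piFinset_univ, ← Finset.prod_univ_sum]
      simp [(fun i => (hW (u' i)).2)]
  have step1 := one_sub_tvd_le _ _ hPu hPu'
  -- Bhattacharyya of product = product of Bhattacharyya
  have step2 : ∑ y : Fin n → Y, Real.sqrt (prodP W u y * prodP W u' y)
      = ∏ i, ∑ y, Real.sqrt (W (u i) y * W (u' i) y) := by
    rw [Finset.prod_univ_sum]
    apply Finset.sum_congr rfl
    intro y _
    unfold prodP
    rw [← Finset.prod_mul_distrib, sqrt_prod' _ _
      (fun i _ => mul_nonneg ((hW (u i)).1 (y i)) ((hW (u' i)).1 (y i)))]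
  -- single letter bound
  have step3 : ∀ i, ∑ y, Real.sqrt (W (u i) y * W (u' i) y) ≤
      Real.exp (-(1/4) * ∑ y, (Real.sqrt (W (u i) y) - Real.sqrt (W (u' i) y)) ^ 2) := by
    intro i
    have hexp : ∀ y, (Real.sqrt (W (u i) y) - Real.sqrt (W (u' i) y)) ^ 2
        = W (u i) y + W (u' i) y - 2 * Real.sqrt (W (u i) y * W (u' i) y) := by
      intro y
      rw [Real.sqrt_mul ((hW (u i)).1 y)]
      have h1 := Real.sq_sqrt ((hW (u i)).1 y)
      have h2 := Real.sq_sqrt ((hW (u' i)).1 y)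
      ring_nf
      nlinarith [h1, h2]
    have hsum : ∑ y, (Real.sqrt (W (u i) y) - Real.sqrt (W (u' i) y)) ^ 2
        = 2 - 2 * ∑ y, Real.sqrt (W (u i) y * W (u' i) y) := by
      simp only [hexp]
      rw [Finset.sum_sub_distrib, Finset.sum_add_distrib, (hW (u i)).2, (hW (u' i)).2,
        ← Finset.mul_sum]
      ring
    set B := ∑ y, Real.sqrt (W (u i) y * W (u' i) y) with hB
    rw [hsum]
    have hB1 : B ≤ 1 := by nlinarith [Finset.sum_nonneg (fun y (_ : y ∈ Finset.univ) =>
      sq_nonneg (Real.sqrt (W (u i) y) - Real.sqrt (W (u' i) y))), hsum]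
    have hx : -(1/4) * (2 - 2 * B) = -((1 - B)/2) := by ring
    rw [hx]
    calc B ≤ 1 + -((1-B)/2) := by linarith
      _ ≤ Real.exp (-((1-B)/2)) := by linarith [Real.add_one_le_exp (-((1-B)/2))]
  -- combine
  have step4 : ∏ i, ∑ y, Real.sqrt (W (u i) y * W (u' i) y) ≤
      ∏ i, Real.exp (-(1/4) * ∑ y, (Real.sqrt (W (u i) y) - Real.sqrt (W (u' i) y)) ^ 2) :=
    Finset.prod_le_prod (fun i _ => Finset.sum_nonneg fun y _ => Real.sqrt_nonneg _)
      (fun i _ => step3 i)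
  rw [← Real.exp_sum] at step4
  calc 1 - tvd (prodP W u) (prodP W u') ≤ ∑ y : Fin n → Y, Real.sqrt (prodP W u y * prodP W u' y) := step1
    _ = ∏ i, ∑ y, Real.sqrt (W (u i) y * W (u' i) y) := step2
    _ ≤ _ := by
        convert step4 using 2
        rw [← Finset.mul_sum]
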